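/- Let φ be a two-sided geometric probability mass function on ℤ with parameters p, q ∈ [0,1) and mode m ∈ ℤ. Then for every α ∈ (0,∞), H_α(φ) − H_∞(φ) < (log α)/(α−1), where at α = 1 the right-hand side is interpreted as 1 (= log e). -/

import Mathlib

set_option maxHeartbeats 1000000

open Real

/-- Rényi entropy of order `α > 0` (Shannon entropy at `α = 1`), natural logarithm. -/
noncomputable def renyiEnt (α : ℝ) (p : ℤ → ℝ) : ℝ :=
  if α = 1 then -∑' n, p n * Real.log (p n)
  else (1 - α)⁻¹ * Real.log (∑' n, p n ^ α)

/-- Min-entropy `H_∞(p) = −log sup_n p(n)`. -/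
noncomputable def minEnt (p : ℤ → ℝ) : ℝ := -Real.log (⨆ n, p n)

/-- The two-sided geometric pmf with parameters `p, q ∈ [0,1)` and mode `m`:
`φ(n) = C·p^{n−m}` for `n ≥ m`, `φ(n) = C·q^{m−n}` for `n ≤ m`,
with `C = (1−p)(1−q)/(1−pq)` and `0⁰ = 1`. -/
noncomputable def twoSidedGeom (p q : ℝ) (m : ℤ) : ℤ → ℝ :=
  fun n =>
    (1 - p) * (1 - q) / (1 - p * q) *
      (if m ≤ n then p ^ (n - m).toNat else q ^ (m - n).toNat)


namespace TSGaux
open Set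

noncomputable def Pf (α x : ℝ) : ℝ := 2*α*(1-x) - 2*(1 - x^α) - (α-1)*((1-x)*(1-x^α))

noncomputable def D1 (α x : ℝ) : ℝ :=
  -(2*α) + 2*α*x^(α-1) + (α-1)*((1 - x^α) + α*(x^(α-1)*(1-x)))

lemma hasDerivAt_Pf {α x : ℝ} (hx : x ≠ 0) : HasDerivAt (Pf α) (D1 α x) x := by
  have h1 : HasDerivAt (fun y : ℝ => y ^ α) (α * x ^ (α - 1)) x :=
    Real.hasDerivAt_rpow_const (Or.inl hx)
  have hid : HasDerivAt (fun y : ℝ => 1 - y) (-1) x := (hasDerivAt_id x).const_sub 1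
  have hxa : HasDerivAt (fun y : ℝ => 1 - y ^ α) (-(α * x ^ (α - 1))) x := h1.const_sub 1
  have h := ((hid.const_mul (2*α)).sub (hxa.const_mul 2)).sub ((hid.mul hxa).const_mul (α-1))
  convert h using 1
  · rfl
  · rfl
  · rfl
  unfold D1; ring

lemma hasDerivAt_D1 {α x : ℝ} (hx : 0 < x) :
    HasDerivAt (D1 α) (α*(α-1)*(α+1)*(x^(α-2)*(1-x))) x := by
  have h1 : HasDerivAt (fun y : ℝ => y ^ α) (α * x ^ (α - 1)) x :=
    Real.hasDerivAt_rpow_const (Or.inl hx.ne')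
  have h2 : HasDerivAt (fun y : ℝ => y ^ (α-1)) ((α-1) * x ^ (α - 2)) x := by
    have h := Real.hasDerivAt_rpow_const (x := x) (p := α - 1) (Or.inl hx.ne')
    have he : α - 1 - 1 = α - 2 := by ring
    rwa [he] at h
  have hid : HasDerivAt (fun y : ℝ => 1 - y) (-1) x := (hasDerivAt_id x).const_sub 1
  have hxa : HasDerivAt (fun y : ℝ => 1 - y ^ α) (-(α * x ^ (α - 1))) x := h1.const_sub 1
  have h := ((hasDerivAt_const x (-(2*α))).add (h2.const_mul (2*α))).add
    ((hxa.add ((h2.mul hid).const_mul α)).const_mul (α-1))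
  convert h using 1
  · rfl
  · rfl
  · rfl
  have hrel : x ^ (α-1) = x ^ (α-2) * x := by
    rw [show α - 1 = (α-2) + 1 by ring, Real.rpow_add_one hx.ne']
  rw [hrel]; ring

lemma Pf_one (α : ℝ) : Pf α 1 = 0 := by simp [Pf]

lemma D1_one (α : ℝ) : D1 α 1 = 0 := by simp [D1]

lemma D1_neg {α x : ℝ} (hα : 1 < α) (hx0 : 0 < x) (hx1 : x < 1) : D1 α x < 0 := by
  have hmono : StrictMonoOn (D1 α) (Icc x 1) := by
    apply strictMonoOn_of_deriv_pos (convex_Icc x 1)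
    · exact fun y hy => (hasDerivAt_D1 (lt_of_lt_of_le hx0 hy.1)).continuousAt.continuousWithinAt
    · intro y hy
      rw [interior_Icc] at hy
      have hy0 : 0 < y := lt_trans hx0 hy.1
      rw [(hasDerivAt_D1 hy0).deriv]
      have h1 : (0:ℝ) < y ^ (α - 2) := Real.rpow_pos_of_pos hy0 _
      have h2 : (0:ℝ) < 1 - y := by linarith [hy.2]
      have h3 : (0:ℝ) < α*(α-1)*(α+1) :=
        mul_pos (mul_pos (by linarith) (by linarith)) (by linarith)
      exact mul_pos h3 (mul_pos h1 h2)
  have := hmono ⟨le_rfl, hx1.le⟩ ⟨hx1.le, le_rfl⟩ hx1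
  rwa [D1_one] at this

lemma D1_pos {α x : ℝ} (hα0 : 0 < α) (hα : α < 1) (hx0 : 0 < x) (hx1 : x < 1) : 0 < D1 α x := by
  have hmono : StrictAntiOn (D1 α) (Icc x 1) := by
    apply strictAntiOn_of_deriv_neg (convex_Icc x 1)
    · exact fun y hy => (hasDerivAt_D1 (lt_of_lt_of_le hx0 hy.1)).continuousAt.continuousWithinAt
    · intro y hy
      rw [interior_Icc] at hy
      have hy0 : 0 < y := lt_trans hx0 hy.1
      rw [(hasDerivAt_D1 hy0).deriv]
      have h1 : (0:ℝ) < y ^ (α - 2) := Real.rpow_pos_of_pos hy0 _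
      have h2 : (0:ℝ) < 1 - y := by linarith [hy.2]
      have h3 : α*(α-1)*(α+1) < 0 :=
        mul_neg_of_neg_of_pos (mul_neg_of_pos_of_neg (by linarith) (by linarith)) (by linarith)
      exact mul_neg_of_neg_of_pos h3 (mul_pos h1 h2)
  have := hmono ⟨le_rfl, hx1.le⟩ ⟨hx1.le, le_rfl⟩ hx1
  rwa [D1_one] at this

lemma Pf_pos {α x : ℝ} (hα : 1 < α) (hx0 : 0 ≤ x) (hx1 : x < 1) : 0 < Pf α x := by
  rcases hx0.eq_or_lt with h | h
  · rw [← h]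
    have : (0:ℝ) ^ α = 0 := Real.zero_rpow (by positivity : α ≠ 0)
    simp only [Pf, this]
    ring_nf
    linarith
  · have hanti : StrictAntiOn (Pf α) (Icc x 1) := by
      apply strictAntiOn_of_deriv_neg (convex_Icc x 1)
      · exact fun y hy =>
          (hasDerivAt_Pf (ne_of_gt (lt_of_lt_of_le h hy.1))).continuousAt.continuousWithinAt
      · intro y hy
        rw [interior_Icc] at hy
        have hy0 : 0 < y := lt_trans h hy.1
        rw [(hasDerivAt_Pf hy0.ne').deriv]
        exact D1_neg hα hy0 hy.2
    have := hanti ⟨le_rfl, hx1.le⟩ ⟨hx1.le, le_rfl⟩ hx1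
    rwa [Pf_one] at this

lemma Pf_neg {α x : ℝ} (hα0 : 0 < α) (hα : α < 1) (hx0 : 0 ≤ x) (hx1 : x < 1) : Pf α x < 0 := by
  rcases hx0.eq_or_lt with h | h
  · rw [← h]
    have : (0:ℝ) ^ α = 0 := Real.zero_rpow (by positivity : α ≠ 0)
    simp only [Pf, this]
    ring_nf
    linarith
  · have hmono : StrictMonoOn (Pf α) (Icc x 1) := by
      apply strictMonoOn_of_deriv_pos (convex_Icc x 1)
      · exact fun y hy =>
          (hasDerivAt_Pf (ne_of_gt (lt_of_lt_of_le h hy.1))).continuousAt.continuousWithinAt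
      · intro y hy
        rw [interior_Icc] at hy
        have hy0 : 0 < y := lt_trans h hy.1
        rw [(hasDerivAt_Pf hy0.ne').deriv]
        exact D1_pos hα0 hα hy0 hy.2
    have := hmono ⟨le_rfl, hx1.le⟩ ⟨hx1.le, le_rfl⟩ hx1
    rwa [Pf_one] at this

lemma keyF_gt {α x : ℝ} (hα : 1 < α) (hx0 : 0 ≤ x) (hx1 : x < 1) :
    (α-1)/2 < α*(1-x^α)⁻¹ - (1-x)⁻¹ := by
  have hu : (0:ℝ) < 1 - x := by linarith
  have hxa : x ^ α < 1 := Real.rpow_lt_one hx0 hx1 (by linarith)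
  have hv : (0:ℝ) < 1 - x ^ α := by linarith
  have heq : α*(1-x^α)⁻¹ - (1-x)⁻¹ - (α-1)/2 = Pf α x / (2*(1-x)*(1-x^α)) := by
    unfold Pf; field_simp
  have hpos : 0 < Pf α x / (2*(1-x)*(1-x^α)) :=
    div_pos (Pf_pos hα hx0 hx1) (by positivity)
  linarith

lemma keyF_lt {α x : ℝ} (hα0 : 0 < α) (hα : α < 1) (hx0 : 0 ≤ x) (hx1 : x < 1) :
    α*(1-x^α)⁻¹ - (1-x)⁻¹ < (α-1)/2 := by
  have hu : (0:ℝ) < 1 - x := by linarith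
  have hxa : x ^ α < 1 := Real.rpow_lt_one hx0 hx1 hα0
  have hv : (0:ℝ) < 1 - x ^ α := by linarith
  have heq : α*(1-x^α)⁻¹ - (1-x)⁻¹ - (α-1)/2 = Pf α x / (2*(1-x)*(1-x^α)) := by
    unfold Pf; field_simp
  have hneg : Pf α x / (2*(1-x)*(1-x^α)) < 0 :=
    div_neg_of_neg_of_pos (Pf_neg hα0 hα hx0 hx1) (by positivity)
  linarith

lemma Q_pos {x : ℝ} (hx0 : 0 ≤ x) (hx1 : x < 1) :
    0 < (1-x) + x*Real.log x - (1-x)^2/2 := by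
  rcases hx0.eq_or_lt with h | h
  · rw [← h]; simp; norm_num
  · have hanti : StrictAntiOn (fun y : ℝ => (1-y) + y*Real.log y - (1-y)^2/2) (Icc x 1) := by
      apply strictAntiOn_of_deriv_neg (convex_Icc x 1)
      · exact (((continuous_const.sub continuous_id).add Real.continuous_mul_log).sub
          (((continuous_const.sub continuous_id).pow 2).div_const 2)).continuousOn
      · intro y hy
        rw [interior_Icc] at hy
        have hy0 : 0 < y := lt_trans h hy.1
        have hD : HasDerivAt (fun y : ℝ => (1-y) + y*Real.log y - (1-y)^2/2)
            (Real.log y + 1 - y) y := by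
          have hid : HasDerivAt (fun y : ℝ => 1 - y) (-1) y := (hasDerivAt_id y).const_sub 1
          have h := (hid.add (Real.hasDerivAt_mul_log hy0.ne')).sub ((hid.pow 2).div_const 2)
          convert h using 1
          · rfl
          · rfl
          · rfl
          ring
        rw [hD.deriv]
        have := Real.log_lt_sub_one_of_pos hy0 (ne_of_lt hy.2)
        linarith
    have h1 := hanti ⟨le_rfl, hx1.le⟩ ⟨hx1.le, le_rfl⟩ hx1
    simp only [Real.log_one] at h1
    norm_num at h1
    linarith

lemma hasSum_ite {f g : ℕ → ℝ} {a b : ℝ} (hf : HasSum f a)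
    (hg : HasSum (fun k => g (k+1)) b) :
    HasSum (fun j : ℤ => if 0 ≤ j then f j.toNat else g (-j).toNat) (a + b) := by
  refine HasSum.of_nat_of_neg_add_one (by simpa using hf) ?_
  convert hg using 2 with k
  split_ifs with hk
  · exact absurd hk (by omega)
  · rw [neg_neg]; congr 1

lemma hasSum_shift {f : ℤ → ℝ} {a : ℝ} (m : ℤ) (h : HasSum f a) :
    HasSum (fun n => f (n - m)) a :=
  (Equiv.subRight m).hasSum_iff.mpr h

lemma pow_rpow_comm {x α : ℝ} (hx : 0 ≤ x) (k : ℕ) : ((x^k : ℝ))^α = (x^α)^k := by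
  rw [← Real.rpow_natCast x k, ← Real.rpow_natCast (x^α) k, ← Real.rpow_mul hx,
    ← Real.rpow_mul hx, mul_comm]

lemma hasSum_geom_rpow {x α : ℝ} (hx0 : 0 ≤ x) (hx1 : x < 1) (hα : 0 < α) :
    HasSum (fun k : ℕ => ((x^k : ℝ))^α) (1 - x^α)⁻¹ := by
  have h := hasSum_geometric_of_lt_one (Real.rpow_nonneg hx0 α) (Real.rpow_lt_one hx0 hx1 hα)
  convert h using 1
  funext k
  exact pow_rpow_comm hx0 k

lemma hasSum_geom_rpow_succ {x α : ℝ} (hx0 : 0 ≤ x) (hx1 : x < 1) (hα : 0 < α) :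
    HasSum (fun k : ℕ => ((x^(k+1) : ℝ))^α) (x^α * (1 - x^α)⁻¹) := by
  have h := (hasSum_geometric_of_lt_one (Real.rpow_nonneg hx0 α)
    (Real.rpow_lt_one hx0 hx1 hα)).mul_left (x^α)
  convert h using 1
  · rfl
  funext k
  rw [pow_rpow_comm hx0, pow_succ]
  ring

lemma hasSum_geom_log {x : ℝ} (hx0 : 0 ≤ x) (hx1 : x < 1) :
    HasSum (fun k : ℕ => (x^k : ℝ) * Real.log (x^k)) (Real.log x * (x/(1-x)^2)) := by
  have h := (hasSum_coe_mul_geometric_of_norm_lt_one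
    (by rwa [Real.norm_eq_abs, abs_of_nonneg hx0] : ‖x‖ < 1)).mul_left (Real.log x)
  convert h using 1
  · rfl
  funext k
  rw [Real.log_pow]
  ring

lemma hasSum_geom_log_succ {x : ℝ} (hx0 : 0 ≤ x) (hx1 : x < 1) :
    HasSum (fun k : ℕ => (x^(k+1) : ℝ) * Real.log (x^(k+1))) (Real.log x * (x/(1-x)^2)) := by
  have h0 : HasSum (fun k : ℕ => ((k:ℝ)) * x ^ k) (x/(1-x)^2) :=
    hasSum_coe_mul_geometric_of_norm_lt_one
      (by rwa [Real.norm_eq_abs, abs_of_nonneg hx0] : ‖x‖ < 1)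
  have h1 := (hasSum_nat_add_iff' (f := fun k : ℕ => (k:ℝ) * x ^ k) 1).mpr h0
  simp only [Finset.range_one, Finset.sum_singleton, Nat.cast_zero, zero_mul, pow_zero,
    sub_zero] at h1
  have h := h1.mul_left (Real.log x)
  convert h using 1
  · rfl
  funext k
  rw [Real.log_pow]
  push_cast
  ring


noncomputable def Gfun (p q : ℝ) : ℤ → ℝ :=
  fun j => if 0 ≤ j then p ^ j.toNat else q ^ (-j).toNat

end TSGaux

/-- For a two-sided geometric pmf `φ` and `α ∈ (0,∞)`,
`H_α(φ) − H_∞(φ) < (log α)/(α−1)`, the right side read as `1` when `α = 1`. -/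
theorem twoSidedGeom_renyi_minEntropy_gap (p q : ℝ)
    (hp : p ∈ Set.Ico (0 : ℝ) 1) (hq : q ∈ Set.Ico (0 : ℝ) 1) (m : ℤ)
    (α : ℝ) (hα : 0 < α) :
    renyiEnt α (twoSidedGeom p q m) - minEnt (twoSidedGeom p q m) <
      if α = 1 then 1 else Real.log α / (α - 1) := by
  obtain ⟨hp0, hp1⟩ := hp
  obtain ⟨hq0, hq1⟩ := hq
  have hup : (0:ℝ) < 1 - p := by linarith
  have huq : (0:ℝ) < 1 - q := by linarith
  have hupq : (0:ℝ) < 1 - p*q := by nlinarith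
  set C : ℝ := (1 - p) * (1 - q) / (1 - p * q) with hCdef
  have hC : 0 < C := div_pos (mul_pos hup huq) hupq
  have hφ : ∀ n, twoSidedGeom p q m n = C * TSGaux.Gfun p q (n - m) := by
    intro n
    unfold twoSidedGeom TSGaux.Gfun
    rw [← hCdef]
    congr 1
    by_cases h : m ≤ n
    · rw [if_pos h, if_pos (by omega : (0:ℤ) ≤ n - m)]
    · rw [if_neg h, if_neg (by omega : ¬ (0:ℤ) ≤ n - m)]
      congr 1
      omega
  have hG0 : ∀ j, 0 ≤ TSGaux.Gfun p q j := by
    intro j; unfold TSGaux.Gfun; split_ifs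
    · exact pow_nonneg hp0 _
    · exact pow_nonneg hq0 _
  have hG1 : ∀ j, TSGaux.Gfun p q j ≤ 1 := by
    intro j; unfold TSGaux.Gfun; split_ifs
    · exact pow_le_one₀ hp0 hp1.le
    · exact pow_le_one₀ hq0 hq1.le
  have hub : ∀ n, twoSidedGeom p q m n ≤ C := by
    intro n
    rw [hφ n]
    calc C * TSGaux.Gfun p q (n-m) ≤ C * 1 := mul_le_mul_of_nonneg_left (hG1 _) hC.le
      _ = C := mul_one C
  have hmode : twoSidedGeom p q m m = C := by
    rw [hφ m]; simp [TSGaux.Gfun]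
  have hsup : (⨆ n, twoSidedGeom p q m n) = C := by
    refine le_antisymm (ciSup_le hub) ?_
    rw [← hmode]
    exact le_ciSup ⟨C, by rintro y ⟨n, rfl⟩; exact hub n⟩ m
  have hminEnt : minEnt (twoSidedGeom p q m) = -Real.log C := by
    rw [minEnt, hsup]
  rcases eq_or_ne α 1 with rfl | hα1
  · -- Shannon case
    rw [if_pos rfl, hminEnt]
    set T : ℝ := Real.log p * (p/(1-p)^2) + Real.log q * (q/(1-q)^2) with hTdef
    have hGsum : HasSum (TSGaux.Gfun p q) ((1-p)⁻¹ + q * (1-q)⁻¹) := by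
      have h2 : HasSum (fun k : ℕ => (q:ℝ)^(k+1)) (q*(1-q)⁻¹) := by
        have h := (hasSum_geometric_of_lt_one hq0 hq1).mul_left q
        convert h using 2 with k
        · rfl
        rw [pow_succ]; ring
      exact TSGaux.hasSum_ite (f := fun k => (p:ℝ)^k) (g := fun k => (q:ℝ)^k)
        (hasSum_geometric_of_lt_one hp0 hp1) h2
    have hGlog : HasSum (fun j => TSGaux.Gfun p q j * Real.log (TSGaux.Gfun p q j)) T := by
      have h := TSGaux.hasSum_ite (f := fun k => (p^k:ℝ) * Real.log (p^k))
        (g := fun k => (q^k:ℝ) * Real.log (q^k))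
        (TSGaux.hasSum_geom_log hp0 hp1) (TSGaux.hasSum_geom_log_succ hq0 hq1)
      have hfe : (fun j : ℤ => TSGaux.Gfun p q j * Real.log (TSGaux.Gfun p q j))
          = (fun j : ℤ => if 0 ≤ j then (p^(j.toNat):ℝ) * Real.log (p^(j.toNat))
              else (q^((-j).toNat):ℝ) * Real.log (q^((-j).toNat))) := by
        funext j; unfold TSGaux.Gfun; split_ifs <;> rfl
      rw [hTdef, hfe]
      exact h
    have hΦ : HasSum (twoSidedGeom p q m) 1 := by
      have h := (TSGaux.hasSum_shift m hGsum).mul_left C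
      have hval : C * ((1-p)⁻¹ + q * (1-q)⁻¹) = 1 := by
        rw [hCdef]; field_simp; ring
      rw [hval] at h
      have hfe : twoSidedGeom p q m = fun n => C * TSGaux.Gfun p q (n - m) := by
        funext n; exact hφ n
      rw [hfe]
      exact h
    have hTφ : HasSum (fun n => TSGaux.Gfun p q (n-m) * Real.log (TSGaux.Gfun p q (n-m))) T :=
      TSGaux.hasSum_shift m hGlog
    have hsum : HasSum (fun n => twoSidedGeom p q m n * Real.log (twoSidedGeom p q m n))
        (Real.log C * 1 + C * T) := by
      have h := (hΦ.mul_left (Real.log C)).add (hTφ.mul_left C)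
      have hfe : (fun n => twoSidedGeom p q m n * Real.log (twoSidedGeom p q m n))
          = fun n => Real.log C * twoSidedGeom p q m n
              + C * (TSGaux.Gfun p q (n-m) * Real.log (TSGaux.Gfun p q (n-m))) := by
        funext n
        rcases (hG0 (n-m)).eq_or_lt with h0 | h0
        · rw [hφ n, ← h0]; simp
        · rw [hφ n, Real.log_mul hC.ne' h0.ne']; ring
      rw [hfe]
      exact h
    unfold renyiEnt
    rw [if_pos rfl, hsum.tsum_eq]
    have hQp := TSGaux.Q_pos hp0 hp1
    have hQq := TSGaux.Q_pos hq0 hq1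
    have h1 : 1/2 - (1-p)⁻¹ < Real.log p * (p/(1-p)^2) := by
      have heq : Real.log p * (p/(1-p)^2) - (1/2 - (1-p)⁻¹)
          = ((1-p) + p*Real.log p - (1-p)^2/2)/(1-p)^2 := by
        field_simp
        ring
      nlinarith [div_pos hQp (by positivity : (0:ℝ) < (1-p)^2)]
    have h2 : 1/2 - (1-q)⁻¹ < Real.log q * (q/(1-q)^2) := by
      have heq : Real.log q * (q/(1-q)^2) - (1/2 - (1-q)⁻¹)
          = ((1-q) + q*Real.log q - (1-q)^2/2)/(1-q)^2 := by
        field_simp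
        ring
      nlinarith [div_pos hQq (by positivity : (0:ℝ) < (1-q)^2)]
    have hTb : 1 - (1-p)⁻¹ - (1-q)⁻¹ < T := by rw [hTdef]; linarith
    have hCinv : C * (1 - (1-p)⁻¹ - (1-q)⁻¹) = -1 := by
      rw [hCdef]; field_simp; ring
    have hfin := mul_lt_mul_of_pos_left hTb hC
    rw [hCinv] at hfin
    linarith
  · -- Rényi case, α ≠ 1
    rw [if_neg hα1, hminEnt]
    have hpa1 : p ^ α < 1 := Real.rpow_lt_one hp0 hp1 hα
    have hqa1 : q ^ α < 1 := Real.rpow_lt_one hq0 hq1 hα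
    have hvp : (0:ℝ) < 1 - p^α := by linarith
    have hvq : (0:ℝ) < 1 - q^α := by linarith
    set A : ℝ := (1-p^α)⁻¹ + q^α * (1-q^α)⁻¹ with hAdef
    have hA : 0 < A := by
      have h1 : 0 < (1-p^α)⁻¹ := by positivity
      have h2 : 0 ≤ q^α * (1-q^α)⁻¹ :=
        mul_nonneg (Real.rpow_nonneg hq0 α) (by positivity)
      rw [hAdef]; linarith
    have hGsumα : HasSum (fun j => TSGaux.Gfun p q j ^ α) A := by
      have h := TSGaux.hasSum_ite (f := fun k => ((p^k:ℝ))^α) (g := fun k => ((q^k:ℝ))^α)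
        (TSGaux.hasSum_geom_rpow hp0 hp1 hα) (TSGaux.hasSum_geom_rpow_succ hq0 hq1 hα)
      have hfe : (fun j : ℤ => TSGaux.Gfun p q j ^ α)
          = (fun j : ℤ => if 0 ≤ j then ((p^(j.toNat):ℝ))^α else ((q^((-j).toNat):ℝ))^α) := by
        funext j; unfold TSGaux.Gfun; split_ifs <;> rfl
      rw [hAdef, hfe]
      exact h
    have hsum : HasSum (fun n => twoSidedGeom p q m n ^ α) (C^α * A) := by
      have h := (TSGaux.hasSum_shift m hGsumα).mul_left (C^α)
      have hfe : (fun n => twoSidedGeom p q m n ^ α)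
          = fun n => C^α * TSGaux.Gfun p q (n-m) ^ α := by
        funext n
        rw [hφ n, Real.mul_rpow hC.le (hG0 _)]
      rw [hfe]
      exact h
    unfold renyiEnt
    rw [if_neg hα1, hsum.tsum_eq,
      Real.log_mul (Real.rpow_pos_of_pos hC α).ne' hA.ne', Real.log_rpow hC]
    have hsub : q^α * (1-q^α)⁻¹ = (1-q^α)⁻¹ - 1 := by
      field_simp
      ring
    have hCA : (1-p)⁻¹ + (1-q)⁻¹ - 1 = 1/C := by
      rw [hCdef]; field_simp; ring
    have h1α : (1:ℝ) - α ≠ 0 := fun h => hα1 (by linarith)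
    have hXeq : ((1-α)⁻¹ * (α * Real.log C + Real.log A) - -Real.log C) * (α-1)
        = -Real.log C - Real.log A := by
      field_simp
      ring
    rcases lt_or_gt_of_ne hα1 with hlt | hgt
    · -- α < 1
      have hk1 := TSGaux.keyF_lt hα hlt hp0 hp1
      have hk2 := TSGaux.keyF_lt hα hlt hq0 hq1
      have hαA : α * A < 1/C := by
        rw [hAdef, hsub, ← hCA]
        have hexp : α * ((1-p^α)⁻¹ + ((1-q^α)⁻¹ - 1))
            = α*(1-p^α)⁻¹ + α*(1-q^α)⁻¹ - α := by ring
        rw [hexp]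
        linarith
      have hprod : α * A * C < 1 := (lt_div_iff₀ hC).mp hαA
      have hlog : Real.log (α * A * C) < 0 :=
        Real.log_neg (by positivity) hprod
      rw [Real.log_mul (mul_pos hα hA).ne' hC.ne', Real.log_mul hα.ne' hA.ne'] at hlog
      rw [lt_div_iff_of_neg (by linarith : α - 1 < 0)]
      linarith [hXeq]
    · -- α > 1
      have hk1 := TSGaux.keyF_gt hgt hp0 hp1
      have hk2 := TSGaux.keyF_gt hgt hq0 hq1
      have hαA : 1/C < α * A := by
        rw [hAdef, hsub, ← hCA]
        have hexp : α * ((1-p^α)⁻¹ + ((1-q^α)⁻¹ - 1))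
            = α*(1-p^α)⁻¹ + α*(1-q^α)⁻¹ - α := by ring
        rw [hexp]
        linarith
      have hprod : 1 < α * A * C := (div_lt_iff₀ hC).mp hαA
      have hlog : 0 < Real.log (α * A * C) := Real.log_pos hprod
      rw [Real.log_mul (mul_pos hα hA).ne' hC.ne', Real.log_mul hα.ne' hA.ne'] at hlog
      rw [lt_div_iff₀ (by linarith : (0:ℝ) < α - 1)]
      linarith [hXeq]
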